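/- Let H be a Hopf algebra over a commutative ring R, regarded as a module algebra over itself via the trivial action on R. Then H is separable over R if and only if there exists a left or right integral t in H with ε(t) invertible in R. -/

import Mathlib

open TensorProduct

noncomputable section

/-! ### Integrals in a Hopf algebra -/

/-- `t` is a left integral in `H`: `h * t = ε(h) • t` for all `h ∈ H`. -/
def IsLeftIntegral (R : Type*) {H : Type*} [CommRing R] [Ring H] [HopfAlgebra R H]
    (t : H) : Prop :=
  ∀ h : H, h * t = Coalgebra.counit (R := R) h • t

/-- `t` is a right integral in `H`: `t * h = ε(h) • t` for all `h ∈ H`. -/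
def IsRightIntegral (R : Type*) {H : Type*} [CommRing R] [Ring H] [HopfAlgebra R H]
    (t : H) : Prop :=
  ∀ h : H, t * h = Coalgebra.counit (R := R) h • t

/-! ### Module algebras -/

variable (R H A : Type*)

/-- Given an `H`-action `ρ` on `A` (an `R`-algebra map `H → End_R A`),
`pairAction ρ w` is the operator on `A ⊗ A` given, for `w = Σ x ⊗ y`, by
`a ⊗ b ↦ Σ (x • a) ⊗ (y • b)`. -/
def pairAction [CommRing R] [Ring H] [HopfAlgebra R H] [Ring A] [Algebra R A]
    (ρ : H →ₐ[R] Module.End R A) :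
    H ⊗[R] H →ₗ[R] A ⊗[R] A →ₗ[R] A ⊗[R] A :=
  (TensorProduct.homTensorHomMap (RingHom.id R) A A A A) ∘ₗ
    (TensorProduct.map ρ.toLinearMap ρ.toLinearMap)

/-- A left `H`-module algebra structure on an `R`-algebra `A`: an `H`-module structure
(an `R`-algebra map `ρ : H → End_R A`) such that multiplication and unit of `A` are
morphisms of `H`-modules, i.e. `h • (a b) = Σ_(h) (h₁ • a)(h₂ • b)` and `h • 1 = ε(h) 1`;
in other words, `A` is an `R`-algebra in the category of left `H`-modules. -/
structure ModuleAlgebra [CommRing R] [Ring H] [HopfAlgebra R H] [Ring A] [Algebra R A] where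
  ρ : H →ₐ[R] Module.End R A
  act_mul : ∀ (h : H) (a b : A),
    ρ h (a * b) = LinearMap.mul' R A (pairAction R H A ρ (Coalgebra.comul h) (a ⊗ₜ[R] b))
  act_one : ∀ h : H, ρ h 1 = algebraMap R A (Coalgebra.counit h)

variable {R H A}

/-- The set of `H`-invariant elements `A^H = {a | h • a = ε(h) a}` of a module algebra. -/
def ModuleAlgebra.invariants [CommRing R] [Ring H] [HopfAlgebra R H] [Ring A] [Algebra R A]
    (ma : ModuleAlgebra R H A) : Set A :=
  {a : A | ∀ h : H, ma.ρ h a = Coalgebra.counit (R := R) h • a}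

/-- The set of central `H`-invariant elements `Z(A)^H` of a module algebra. -/
def ModuleAlgebra.centralInvariants [CommRing R] [Ring H] [HopfAlgebra R H] [Ring A]
    [Algebra R A] (ma : ModuleAlgebra R H A) : Set A :=
  {a : A | (∀ b : A, a * b = b * a) ∧ ∀ h : H, ma.ρ h a = Coalgebra.counit (R := R) h • a}

/-- A subset `I ⊆ A` is `H`-stable if it is closed under the `H`-action. -/
def IsHStable [CommRing R] [Ring H] [HopfAlgebra R H] [Ring A] [Algebra R A]
    (ma : ModuleAlgebra R H A) (I : Set A) : Prop :=
  ∀ h : H, ∀ x ∈ I, ma.ρ h x ∈ I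

variable (R H A)

/-- `B` realises the smash product `A # H` of a left `H`-module algebra `A` with `H`:
`B` contains `A` and `H` as subalgebras, the multiplication map `A ⊗_R H → B`,
`a ⊗ h ↦ a·h` is an `R`-module isomorphism (so `B = A ⊗_R H` as `R`-module), and
`(1 # h)(a # 1) = Σ_(h) (h₁ • a) # h₂` holds, which forces the smash product
multiplication `(a # h)(b # g) = Σ_(h) a (h₁ • b) # h₂ g`. -/
structure SmashProductStructure [CommRing R] [Ring H] [HopfAlgebra R H] [Ring A] [Algebra R A]
    (ma : ModuleAlgebra R H A) (B : Type*) [Ring B] [Algebra R B] where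
  ιA : A →ₐ[R] B
  ιH : H →ₐ[R] B
  mul_bij : Function.Bijective
    ((LinearMap.mul' R B) ∘ₗ (TensorProduct.map ιA.toLinearMap ιH.toLinearMap))
  commute_rel : ∀ (h : H) (a : A),
    ιH h * ιA a =
      LinearMap.mul' R B
        ((TensorProduct.map (ιA.toLinearMap ∘ₗ ((LinearMap.flip ma.ρ.toLinearMap) a))
          ιH.toLinearMap) (Coalgebra.comul h))

variable {R H A}

/-! ### Ideals and semiprimeness -/

/-- The ordered product `a₁ ⋯ aₙ` of a nonempty family of ring elements,
relative to a multiplication `μ`. -/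
def nProd {A : Type*} (μ : A → A → A) : A → List A → A
  | a, [] => a
  | a, b :: l => μ a (nProd μ b l)

/-- `I` is a two-sided ideal of `A` (described as a set). -/
def IsIdealSet (A : Type*) [Ring A] (I : Set A) : Prop :=
  (0 : A) ∈ I ∧ (∀ x ∈ I, ∀ y ∈ I, x + y ∈ I) ∧
    ∀ a : A, ∀ x ∈ I, a * x ∈ I ∧ x * a ∈ I

/-- `I` is a two-sided ideal with respect to a (possibly twisted) multiplication `μ`. -/
def IsIdealSetMul {A : Type*} [Ring A] (μ : A → A → A) (I : Set A) : Prop :=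
  (0 : A) ∈ I ∧ (∀ x ∈ I, ∀ y ∈ I, x + y ∈ I) ∧
    ∀ a : A, ∀ x ∈ I, μ a x ∈ I ∧ μ x a ∈ I

/-- `I` is a nilpotent ideal with respect to the multiplication `μ`: some power `Iⁿ`
vanishes, i.e. all products of `n + 1` elements of `I` are zero. -/
def IsNilpotentMulSet {A : Type*} [Zero A] (μ : A → A → A) (I : Set A) : Prop :=
  ∃ n : ℕ, ∀ f : Fin (n + 1) → A, (∀ i, f i ∈ I) →
    nProd μ (f 0) (List.ofFn fun i : Fin n => f i.succ) = 0

/-- A ring is semiprime if it has no nonzero nilpotent two-sided ideal. -/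
def RingIsSemiprime (A : Type*) [Ring A] : Prop :=
  ∀ I : Set A, IsIdealSet A I → IsNilpotentMulSet (· * ·) I → I ⊆ {0}

/-- A module algebra is `H`-semiprime if it has no nonzero nilpotent `H`-stable
two-sided ideal. -/
def IsHSemiprime [CommRing R] [Ring H] [HopfAlgebra R H] [Ring A] [Algebra R A]
    (ma : ModuleAlgebra R H A) : Prop :=
  ∀ I : Set A, IsIdealSet A I → IsHStable ma I → IsNilpotentMulSet (· * ·) I → I ⊆ {0}

/-! ### Separability of ring extensions -/

universe usep

/-- The families `x y : Fin n → T` represent a separability idempotent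
`ω = Σᵢ xᵢ ⊗ yᵢ ∈ T ⊗_S T` for the ring extension `f : S → T`: `Σᵢ xᵢ yᵢ = 1` and
`t ω = ω t` for all `t ∈ T`, where equality of elements of `T ⊗_S T` is expressed
through all `S`-balanced biadditive maps out of `T × T` (the universal property of
the tensor product of the `(T,S)`-bimodule `T` with the `(S,T)`-bimodule `T`). -/
def IsSeparabilityIdempotent {S : Type*} {T : Type usep} [Ring S] [Ring T] (f : S →+* T)
    {n : ℕ} (x y : Fin n → T) : Prop :=
  (∑ i, x i * y i) = 1 ∧
  ∀ (M : Type usep) [AddCommGroup M] (β : T → T → M),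
    (∀ t₁ t₂ u, β (t₁ + t₂) u = β t₁ u + β t₂ u) →
    (∀ t u₁ u₂, β t (u₁ + u₂) = β t u₁ + β t u₂) →
    (∀ (s : S) (t u : T), β (t * f s) u = β t (f s * u)) →
    ∀ t : T, (∑ i, β (t * x i) (y i)) = ∑ i, β (x i) (y i * t)

/-- The ring extension `f : S → T` is separable: there exists a separability
idempotent `ω ∈ T ⊗_S T`. -/
def IsSeparableExtension {S : Type*} {T : Type usep} [Ring S] [Ring T] (f : S →+* T) : Prop :=
  ∃ (n : ℕ) (x y : Fin n → T), IsSeparabilityIdempotent f x y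

namespace SepAux
open Coalgebra
variable {R H : Type*} [CommRing R] [Ring H] [HopfAlgebra R H]
variable {R H : Type*} [CommRing R] [Ring H] [HopfAlgebra R H]
local notation "S" => HopfAlgebra.antipode (R := R) (A := H)
local notation "ε" => Coalgebra.counit (R := R) (A := H)
local notation "Δ" => Coalgebra.comul (R := R) (A := H)

lemma sum_counit_smul {a : H} (r : Repr R a (H × H)) :
    ∑ i ∈ r.index, ε (r.left i) • r.right i = a := by
  have h := Coalgebra.sum_counit_tmul_eq (R := R) r
  have h2 := congrArg (TensorProduct.lid R H) h
  rw [map_sum] at h2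
  simpa only [TensorProduct.lid_tmul, one_smul] using h2

lemma sum_smul_counit {a : H} (r : Repr R a (H × H)) :
    ∑ i ∈ r.index, ε (r.right i) • r.left i = a := by
  have h := Coalgebra.sum_tmul_counit_eq (R := R) r
  have h2 := congrArg (TensorProduct.rid R H) h
  rw [map_sum] at h2
  simpa only [TensorProduct.rid_tmul, one_smul] using h2

def prodRepr {a b : H} (ra : Repr R a (H × H)) (rb : Repr R b (H × H)) :
    Repr R (a * b) ((H × H) × (H × H)) where
  index := ra.index ×ˢ rb.index
  left p := ra.left p.1 * rb.left p.2
  right p := ra.right p.1 * rb.right p.2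
  eq := by
    rw [Bialgebra.comul_mul, ← ra.eq, ← rb.eq, Finset.sum_mul_sum, Finset.sum_product]
    simp [Algebra.TensorProduct.tmul_mul_tmul]

lemma repr3_right {a : H} (r : Repr R a (H × H)) (r2 : ∀ i : r.ι, Repr R (r.right i) (H × H)) :
    ∑ i ∈ r.index, ∑ q ∈ (r2 i).index,
      r.left i ⊗ₜ[R] ((r2 i).left q ⊗ₜ[R] (r2 i).right q) =
    LinearMap.lTensor H Δ (Δ a) := by
  rw [← r.eq, map_sum]
  refine Finset.sum_congr rfl fun i _ => ?_
  rw [← TensorProduct.tmul_sum, (r2 i).eq, LinearMap.lTensor_tmul]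

lemma repr3_left {a : H} (r : Repr R a (H × H)) (r1 : ∀ i : r.ι, Repr R (r.left i) (H × H)) :
    ∑ i ∈ r.index, ∑ p ∈ (r1 i).index,
      (r1 i).left p ⊗ₜ[R] ((r1 i).right p ⊗ₜ[R] r.right i) =
    LinearMap.lTensor H Δ (Δ a) := by
  rw [← Coalgebra.coassoc_apply, ← r.eq, map_sum, map_sum]
  refine Finset.sum_congr rfl fun i _ => ?_
  rw [LinearMap.rTensor_tmul, ← (r1 i).eq, TensorProduct.sum_tmul, map_sum]
  simp

lemma sum_regroup {M : Type*} [AddCommMonoid M] [Module R M]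
    (L : H ⊗[R] (H ⊗[R] H) →ₗ[R] M) {a : H} (r : Repr R a (H × H))
    (r1 : ∀ i : r.ι, Repr R (r.left i) (H × H)) (r2 : ∀ i : r.ι, Repr R (r.right i) (H × H)) :
    ∑ i ∈ r.index, ∑ p ∈ (r1 i).index,
      L ((r1 i).left p ⊗ₜ[R] ((r1 i).right p ⊗ₜ[R] r.right i)) =
    ∑ i ∈ r.index, ∑ q ∈ (r2 i).index,
      L (r.left i ⊗ₜ[R] ((r2 i).left q ⊗ₜ[R] (r2 i).right q)) := by
  have h1 := congrArg L (repr3_left r r1)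
  have h2 := congrArg L (repr3_right r r2)
  rw [map_sum] at h1 h2
  simp_rw [map_sum] at h1 h2
  rw [h1, h2]

def tri (g₁ g₂ g₃ : H →ₗ[R] H) : H ⊗[R] (H ⊗[R] H) →ₗ[R] H :=
  LinearMap.mul' R H ∘ₗ
    TensorProduct.map g₁ (LinearMap.mul' R H ∘ₗ TensorProduct.map g₂ g₃)

@[simp] lemma tri_apply (g₁ g₂ g₃ : H →ₗ[R] H) (x y z : H) :
    tri g₁ g₂ g₃ (x ⊗ₜ[R] (y ⊗ₜ[R] z)) = g₁ x * (g₂ y * g₃ z) := by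
  simp [tri]

lemma antipode_mul_aux {a b : H} (ra : Repr R a (H × H)) (rb : Repr R b (H × H))
    (ra1 : ∀ i : ra.ι, Repr R (ra.left i) (H × H)) (ra2 : ∀ i : ra.ι, Repr R (ra.right i) (H × H))
    (rb1 : ∀ j : rb.ι, Repr R (rb.left j) (H × H)) (rb2 : ∀ j : rb.ι, Repr R (rb.right j) (H × H)) :
    S (a * b) = S b * S a := by
  -- the two "convolution" linear maps
  set LA : H ⊗[R] (H ⊗[R] H) →ₗ[R] H :=
    ∑ j ∈ rb.index, ∑ q ∈ (rb1 j).index,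
      tri (S ∘ₗ LinearMap.mulRight R ((rb1 j).left q))
          (LinearMap.mulRight R ((rb1 j).right q))
          (LinearMap.mulLeft R (S (rb.right j)) ∘ₗ S) with hLA
  set LB : H ⊗[R] (H ⊗[R] H) →ₗ[R] H :=
    ∑ i ∈ ra.index, ∑ p ∈ (ra2 i).index,
      tri (S ∘ₗ LinearMap.mulLeft R (ra.left i))
          (LinearMap.mulLeft R ((ra2 i).left p))
          (LinearMap.mulRight R (S ((ra2 i).right p)) ∘ₗ S) with hLB
  have hLAapp : ∀ x₁ x₂ x₃ : H, LA (x₁ ⊗ₜ[R] (x₂ ⊗ₜ[R] x₃)) =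
      ∑ j ∈ rb.index, ∑ q ∈ (rb1 j).index,
        S (x₁ * (rb1 j).left q) *
          ((x₂ * (rb1 j).right q) * (S (rb.right j) * S x₃)) := by
    intro x₁ x₂ x₃
    rw [hLA]
    simp [LinearMap.sum_apply]
  have hLBapp : ∀ y₁ y₂ y₃ : H, LB (y₁ ⊗ₜ[R] (y₂ ⊗ₜ[R] y₃)) =
      ∑ i ∈ ra.index, ∑ p ∈ (ra2 i).index,
        S (ra.left i * y₁) *
          (((ra2 i).left p * y₂) * (S y₃ * S ((ra2 i).right p))) := by
    intro y₁ y₂ y₃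
    rw [hLB]
    simp [LinearMap.sum_apply]
  -- inner collapse 1
  have hcol1 : ∀ i : ra.ι, ∀ j : rb.ι,
      ∑ p ∈ (ra1 i).index, ∑ q ∈ (rb1 j).index,
        S ((ra1 i).left p * (rb1 j).left q) *
          (((ra1 i).right p * (rb1 j).right q) * (S (rb.right j) * S (ra.right i)))
      = (ε (ra.left i) * ε (rb.left j)) • (S (rb.right j) * S (ra.right i)) := by
    intro i j
    have h := HopfAlgebra.sum_antipode_mul_eq_smul (R := R) (prodRepr (ra1 i) (rb1 j))
    rw [prodRepr] at h
    simp only [Finset.sum_product] at h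
    simp_rw [← mul_assoc] at h ⊢
    simp_rw [← Finset.sum_mul]
    rw [h, Bialgebra.counit_mul]
    simp [smul_mul_assoc, mul_assoc]
  -- inner collapse 2
  have hcol2 : ∀ i : ra.ι, ∀ j : rb.ι,
      ∑ p ∈ (ra2 i).index, ∑ q ∈ (rb2 j).index,
        S (ra.left i * rb.left j) *
          (((ra2 i).left p * (rb2 j).left q) * (S ((rb2 j).right q) * S ((ra2 i).right p)))
      = (ε (ra.right i) * ε (rb.right j)) • S (ra.left i * rb.left j) := by
    intro i j
    have hq : ∀ p ∈ (ra2 i).index,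
        ∑ q ∈ (rb2 j).index,
          ((ra2 i).left p * (rb2 j).left q) * (S ((rb2 j).right q) * S ((ra2 i).right p))
        = ε (rb.right j) • ((ra2 i).left p * S ((ra2 i).right p)) := by
      intro p _
      have hb := HopfAlgebra.sum_mul_antipode_eq_smul (R := R) (rb2 j)
      calc ∑ q ∈ (rb2 j).index,
          ((ra2 i).left p * (rb2 j).left q) * (S ((rb2 j).right q) * S ((ra2 i).right p))
          = (ra2 i).left p * ((∑ q ∈ (rb2 j).index, (rb2 j).left q * S ((rb2 j).right q)) *
              S ((ra2 i).right p)) := by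
            rw [Finset.sum_mul, Finset.mul_sum]
            exact Finset.sum_congr rfl fun q _ => by simp only [mul_assoc]
        _ = ε (rb.right j) • ((ra2 i).left p * S ((ra2 i).right p)) := by
            rw [hb, smul_mul_assoc, one_mul, mul_smul_comm]
    calc ∑ p ∈ (ra2 i).index, ∑ q ∈ (rb2 j).index,
        S (ra.left i * rb.left j) *
          (((ra2 i).left p * (rb2 j).left q) * (S ((rb2 j).right q) * S ((ra2 i).right p)))
        = S (ra.left i * rb.left j) * ∑ p ∈ (ra2 i).index, ∑ q ∈ (rb2 j).index,
            ((ra2 i).left p * (rb2 j).left q) * (S ((rb2 j).right q) * S ((ra2 i).right p)) := by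
          rw [Finset.mul_sum]
          exact Finset.sum_congr rfl fun p _ => by rw [Finset.mul_sum]
      _ = S (ra.left i * rb.left j) *
            (ε (rb.right j) • ∑ p ∈ (ra2 i).index, (ra2 i).left p * S ((ra2 i).right p)) := by
          rw [Finset.smul_sum]
          exact congrArg _ (Finset.sum_congr rfl hq)
      _ = (ε (ra.right i) * ε (rb.right j)) • S (ra.left i * rb.left j) := by
          rw [HopfAlgebra.sum_mul_antipode_eq_smul (R := R) (ra2 i)]
          rw [smul_smul, mul_smul_comm, mul_one, mul_comm (ε (rb.right j))]
  -- step E1 : S b * S a as a 4-fold sum, order (i, p, j, q)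
  have hSb : S b = ∑ j ∈ rb.index, ε (rb.left j) • S (rb.right j) := by
    conv_lhs => rw [← sum_counit_smul rb]
    rw [map_sum]; simp
  have hSa : S a = ∑ i ∈ ra.index, ε (ra.left i) • S (ra.right i) := by
    conv_lhs => rw [← sum_counit_smul ra]
    rw [map_sum]; simp
  have e1 : S b * S a =
      ∑ i ∈ ra.index, ∑ p ∈ (ra1 i).index,
        LA ((ra1 i).left p ⊗ₜ[R] ((ra1 i).right p ⊗ₜ[R] ra.right i)) := by
    calc S b * S a
        = ∑ i ∈ ra.index, ∑ j ∈ rb.index,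
            (ε (ra.left i) * ε (rb.left j)) • (S (rb.right j) * S (ra.right i)) := by
          rw [hSb, hSa, Finset.sum_mul_sum, Finset.sum_comm]
          refine Finset.sum_congr rfl fun i _ => Finset.sum_congr rfl fun j _ => ?_
          rw [smul_mul_smul_comm, mul_comm (ε (rb.left j))]
      _ = ∑ i ∈ ra.index, ∑ j ∈ rb.index, ∑ p ∈ (ra1 i).index, ∑ q ∈ (rb1 j).index,
            S ((ra1 i).left p * (rb1 j).left q) *
              (((ra1 i).right p * (rb1 j).right q) * (S (rb.right j) * S (ra.right i))) := by
          exact Finset.sum_congr rfl fun i _ => Finset.sum_congr rfl fun j _ => (hcol1 i j).symm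
      _ = ∑ i ∈ ra.index, ∑ p ∈ (ra1 i).index, ∑ j ∈ rb.index, ∑ q ∈ (rb1 j).index,
            S ((ra1 i).left p * (rb1 j).left q) *
              (((ra1 i).right p * (rb1 j).right q) * (S (rb.right j) * S (ra.right i))) :=
          Finset.sum_congr rfl fun i _ => Finset.sum_comm
      _ = ∑ i ∈ ra.index, ∑ p ∈ (ra1 i).index,
            LA ((ra1 i).left p ⊗ₜ[R] ((ra1 i).right p ⊗ₜ[R] ra.right i)) :=
          Finset.sum_congr rfl fun i _ => Finset.sum_congr rfl fun p _ =>
            (hLAapp _ _ _).symm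
  -- step E2 : S (a*b) as a 4-fold sum, order (j, q, i, p)
  have e2 : S (a * b) =
      ∑ j ∈ rb.index, ∑ q ∈ (rb2 j).index,
        LB (rb.left j ⊗ₜ[R] ((rb2 j).left q ⊗ₜ[R] (rb2 j).right q)) := by
    have hab : a * b = ∑ i ∈ ra.index, ∑ j ∈ rb.index,
        (ε (ra.right i) * ε (rb.right j)) • (ra.left i * rb.left j) := by
      conv_lhs => rw [← sum_smul_counit ra, ← sum_smul_counit rb]
      rw [Finset.sum_mul_sum]
      exact Finset.sum_congr rfl fun i _ => Finset.sum_congr rfl fun j _ =>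
        smul_mul_smul_comm _ _ _ _
    calc S (a * b)
        = ∑ i ∈ ra.index, ∑ j ∈ rb.index,
            (ε (ra.right i) * ε (rb.right j)) • S (ra.left i * rb.left j) := by
          rw [hab, map_sum]
          exact Finset.sum_congr rfl fun i _ => by rw [map_sum]; simp
      _ = ∑ i ∈ ra.index, ∑ j ∈ rb.index, ∑ p ∈ (ra2 i).index, ∑ q ∈ (rb2 j).index,
            S (ra.left i * rb.left j) *
              (((ra2 i).left p * (rb2 j).left q) *
                (S ((rb2 j).right q) * S ((ra2 i).right p))) :=
          Finset.sum_congr rfl fun i _ => Finset.sum_congr rfl fun j _ => (hcol2 i j).symm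
      _ = ∑ j ∈ rb.index, ∑ i ∈ ra.index, ∑ p ∈ (ra2 i).index, ∑ q ∈ (rb2 j).index,
            S (ra.left i * rb.left j) *
              (((ra2 i).left p * (rb2 j).left q) *
                (S ((rb2 j).right q) * S ((ra2 i).right p))) := Finset.sum_comm
      _ = ∑ j ∈ rb.index, ∑ i ∈ ra.index, ∑ q ∈ (rb2 j).index, ∑ p ∈ (ra2 i).index,
            S (ra.left i * rb.left j) *
              (((ra2 i).left p * (rb2 j).left q) *
                (S ((rb2 j).right q) * S ((ra2 i).right p))) :=
          Finset.sum_congr rfl fun j _ => Finset.sum_congr rfl fun i _ => Finset.sum_comm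
      _ = ∑ j ∈ rb.index, ∑ q ∈ (rb2 j).index, ∑ i ∈ ra.index, ∑ p ∈ (ra2 i).index,
            S (ra.left i * rb.left j) *
              (((ra2 i).left p * (rb2 j).left q) *
                (S ((rb2 j).right q) * S ((ra2 i).right p))) :=
          Finset.sum_congr rfl fun j _ => Finset.sum_comm
      _ = ∑ j ∈ rb.index, ∑ q ∈ (rb2 j).index,
            LB (rb.left j ⊗ₜ[R] ((rb2 j).left q ⊗ₜ[R] (rb2 j).right q)) :=
          Finset.sum_congr rfl fun j _ => Finset.sum_congr rfl fun q _ =>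
            (hLBapp _ _ _).symm
  -- chain everything
  rw [e1, e2, sum_regroup LA ra ra1 ra2, ← sum_regroup LB rb rb1 rb2]
  symm
  -- now: Σ_i Σ_{p∈ra2} LA(ALᵢ ⊗ (A2L ⊗ A2R)) = Σ_j Σ_{q∈rb1} LB(B1L ⊗ (B1R ⊗ BRⱼ))
  calc ∑ i ∈ ra.index, ∑ p ∈ (ra2 i).index,
        LA (ra.left i ⊗ₜ[R] ((ra2 i).left p ⊗ₜ[R] (ra2 i).right p))
      = ∑ i ∈ ra.index, ∑ p ∈ (ra2 i).index, ∑ j ∈ rb.index, ∑ q ∈ (rb1 j).index,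
          S (ra.left i * (rb1 j).left q) *
            (((ra2 i).left p * (rb1 j).right q) * (S (rb.right j) * S ((ra2 i).right p))) :=
        Finset.sum_congr rfl fun i _ => Finset.sum_congr rfl fun p _ => hLAapp _ _ _
    _ = ∑ i ∈ ra.index, ∑ j ∈ rb.index, ∑ p ∈ (ra2 i).index, ∑ q ∈ (rb1 j).index,
          S (ra.left i * (rb1 j).left q) *
            (((ra2 i).left p * (rb1 j).right q) * (S (rb.right j) * S ((ra2 i).right p))) :=
        Finset.sum_congr rfl fun i _ => Finset.sum_comm
    _ = ∑ j ∈ rb.index, ∑ i ∈ ra.index, ∑ p ∈ (ra2 i).index, ∑ q ∈ (rb1 j).index,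
          S (ra.left i * (rb1 j).left q) *
            (((ra2 i).left p * (rb1 j).right q) * (S (rb.right j) * S ((ra2 i).right p))) :=
        Finset.sum_comm
    _ = ∑ j ∈ rb.index, ∑ i ∈ ra.index, ∑ q ∈ (rb1 j).index, ∑ p ∈ (ra2 i).index,
          S (ra.left i * (rb1 j).left q) *
            (((ra2 i).left p * (rb1 j).right q) * (S (rb.right j) * S ((ra2 i).right p))) :=
        Finset.sum_congr rfl fun j _ => Finset.sum_congr rfl fun i _ => Finset.sum_comm
    _ = ∑ j ∈ rb.index, ∑ q ∈ (rb1 j).index, ∑ i ∈ ra.index, ∑ p ∈ (ra2 i).index,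
          S (ra.left i * (rb1 j).left q) *
            (((ra2 i).left p * (rb1 j).right q) * (S (rb.right j) * S ((ra2 i).right p))) :=
        Finset.sum_congr rfl fun j _ => Finset.sum_comm
    _ = ∑ j ∈ rb.index, ∑ q ∈ (rb1 j).index,
          LB ((rb1 j).left q ⊗ₜ[R] ((rb1 j).right q ⊗ₜ[R] rb.right j)) :=
        Finset.sum_congr rfl fun j _ => Finset.sum_congr rfl fun q _ =>
          (hLBapp _ _ _).symm

lemma antipode_mul (a b : H) : S (a * b) = S b * S a :=
  antipode_mul_aux (ℛ R a) (ℛ R b) (fun i => ℛ R _) (fun i => ℛ R _)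
    (fun j => ℛ R _) (fun j => ℛ R _)

lemma key_left {t : H} (ht : ∀ g : H, g * t = ε g • t) (h : H) :
    TensorProduct.map (LinearMap.mulLeft R h) LinearMap.id
        (LinearMap.lTensor H S (Δ t)) =
    TensorProduct.map LinearMap.id (LinearMap.mulRight R h)
        (LinearMap.lTensor H S (Δ t)) := by
  classical
  obtain ⟨rt⟩ : Nonempty (Repr R t (H × H)) := ⟨ℛ R t⟩
  obtain ⟨rh⟩ : Nonempty (Repr R h (H × H)) := ⟨ℛ R h⟩
  set rh1 : ∀ i : rh.ι, Repr R (rh.left i) (H × H) := fun i => ℛ R _ with hrh1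
  set rh2 : ∀ i : rh.ι, Repr R (rh.right i) (H × H) := fun i => ℛ R _ with hrh2
  have hw : LinearMap.lTensor H S (Δ t) =
      ∑ k ∈ rt.index, rt.left k ⊗ₜ[R] S (rt.right k) := by
    rw [← rt.eq, map_sum]; simp
  set L : H ⊗[R] (H ⊗[R] H) →ₗ[R] H ⊗[R] H :=
    ∑ k ∈ rt.index,
      TensorProduct.map (LinearMap.mulRight R (rt.left k))
        (LinearMap.mulLeft R (S (rt.right k)) ∘ₗ
          (LinearMap.mul' R H ∘ₗ TensorProduct.map S LinearMap.id)) with hL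
  have hLapp : ∀ x₁ x₂ x₃ : H, L (x₁ ⊗ₜ[R] (x₂ ⊗ₜ[R] x₃)) =
      ∑ k ∈ rt.index, (x₁ * rt.left k) ⊗ₜ[R] (S (rt.right k) * (S x₂ * x₃)) := by
    intro x₁ x₂ x₃
    rw [hL]
    simp [LinearMap.sum_apply]
  have hsub : ∀ i : rh.ι,
      ∑ k ∈ rt.index, ε (rh.left i) • (rt.left k ⊗ₜ[R] (S (rt.right k) * rh.right i)) =
      ∑ p ∈ (rh1 i).index,
        L ((rh1 i).left p ⊗ₜ[R] ((rh1 i).right p ⊗ₜ[R] rh.right i)) := by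
    intro i
    set G : H ⊗[R] H →ₗ[R] H ⊗[R] H :=
      TensorProduct.map LinearMap.id
        (LinearMap.mulRight R (rh.right i) ∘ₗ S) with hG
    have hGapp : ∀ u v : H, G (u ⊗ₜ[R] v) = u ⊗ₜ[R] (S v * rh.right i) := by
      intro u v; rw [hG]; simp
    have h1 : ∑ k ∈ rt.index, ε (rh.left i) •
        (rt.left k ⊗ₜ[R] (S (rt.right k) * rh.right i)) = G (Δ (ε (rh.left i) • t)) := by
      rw [map_smul, map_smul, ← rt.eq, map_sum, Finset.smul_sum]
      exact Finset.sum_congr rfl fun k _ => by rw [hGapp]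
    rw [h1, ← ht (rh.left i), ← (prodRepr (rh1 i) rt).eq, map_sum]
    simp only [prodRepr, Finset.sum_product]
    refine Finset.sum_congr rfl fun p _ => ?_
    rw [hLapp]
    refine Finset.sum_congr rfl fun k _ => ?_
    rw [hGapp, antipode_mul, mul_assoc]
  calc TensorProduct.map (LinearMap.mulLeft R h) LinearMap.id (LinearMap.lTensor H S (Δ t))
      = ∑ k ∈ rt.index, (h * rt.left k) ⊗ₜ[R] S (rt.right k) := by
        rw [hw, map_sum]; simp
    _ = ∑ i ∈ rh.index, ∑ k ∈ rt.index,
          ε (rh.right i) • ((rh.left i * rt.left k) ⊗ₜ[R] S (rt.right k)) := by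
        rw [Finset.sum_comm]
        refine Finset.sum_congr rfl fun k _ => ?_
        conv_lhs => rw [← sum_smul_counit rh]
        rw [Finset.sum_mul, TensorProduct.sum_tmul]
        exact Finset.sum_congr rfl fun i _ => by
          rw [smul_mul_assoc, TensorProduct.smul_tmul']
    _ = ∑ i ∈ rh.index, ∑ q ∈ (rh2 i).index,
          L (rh.left i ⊗ₜ[R] ((rh2 i).left q ⊗ₜ[R] (rh2 i).right q)) := by
        refine Finset.sum_congr rfl fun i _ => ?_
        simp_rw [hLapp]
        rw [Finset.sum_comm]
        refine Finset.sum_congr rfl fun k _ => ?_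
        rw [← TensorProduct.tmul_sum, ← Finset.mul_sum,
          HopfAlgebra.sum_antipode_mul_eq_smul (R := R) (rh2 i),
          mul_smul_comm, mul_one, TensorProduct.tmul_smul]
    _ = ∑ i ∈ rh.index, ∑ p ∈ (rh1 i).index,
          L ((rh1 i).left p ⊗ₜ[R] ((rh1 i).right p ⊗ₜ[R] rh.right i)) :=
        (sum_regroup L rh rh1 rh2).symm
    _ = ∑ i ∈ rh.index, ∑ k ∈ rt.index,
          ε (rh.left i) • (rt.left k ⊗ₜ[R] (S (rt.right k) * rh.right i)) :=
        (Finset.sum_congr rfl fun i _ => (hsub i).symm)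
    _ = ∑ k ∈ rt.index, rt.left k ⊗ₜ[R] (S (rt.right k) * h) := by
        rw [Finset.sum_comm]
        refine Finset.sum_congr rfl fun k _ => ?_
        conv_rhs => rw [← sum_counit_smul rh]
        rw [Finset.mul_sum, TensorProduct.tmul_sum]
        exact Finset.sum_congr rfl fun i _ => by
          rw [mul_smul_comm, TensorProduct.tmul_smul]
    _ = TensorProduct.map LinearMap.id (LinearMap.mulRight R h)
          (LinearMap.lTensor H S (Δ t)) := by
        rw [hw, map_sum]; simp

lemma key_right {t : H} (ht : ∀ g : H, t * g = ε g • t) (h : H) :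
    TensorProduct.map (LinearMap.mulLeft R h) LinearMap.id
        (LinearMap.rTensor H S (Δ t)) =
    TensorProduct.map LinearMap.id (LinearMap.mulRight R h)
        (LinearMap.rTensor H S (Δ t)) := by
  classical
  obtain ⟨rt⟩ : Nonempty (Repr R t (H × H)) := ⟨ℛ R t⟩
  obtain ⟨rh⟩ : Nonempty (Repr R h (H × H)) := ⟨ℛ R h⟩
  set rh1 : ∀ i : rh.ι, Repr R (rh.left i) (H × H) := fun i => ℛ R _ with hrh1
  set rh2 : ∀ i : rh.ι, Repr R (rh.right i) (H × H) := fun i => ℛ R _ with hrh2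
  have hw : LinearMap.rTensor H S (Δ t) =
      ∑ k ∈ rt.index, S (rt.left k) ⊗ₜ[R] rt.right k := by
    rw [← rt.eq, map_sum]; simp
  set L : H ⊗[R] (H ⊗[R] H) →ₗ[R] H ⊗[R] H :=
    ∑ k ∈ rt.index,
      (TensorProduct.map
        (LinearMap.mulRight R (S (rt.left k)) ∘ₗ
          (LinearMap.mul' R H ∘ₗ TensorProduct.map LinearMap.id S))
        (LinearMap.mulLeft R (rt.right k))) ∘ₗ
        (TensorProduct.assoc R H H H).symm.toLinearMap with hL
  have hLapp : ∀ x₁ x₂ x₃ : H, L (x₁ ⊗ₜ[R] (x₂ ⊗ₜ[R] x₃)) =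
      ∑ k ∈ rt.index, ((x₁ * S x₂) * S (rt.left k)) ⊗ₜ[R] (rt.right k * x₃) := by
    intro x₁ x₂ x₃
    rw [hL]
    simp [LinearMap.sum_apply]
  have hsub : ∀ i : rh.ι,
      ∑ k ∈ rt.index, ε (rh.right i) •
        ((rh.left i * S (rt.left k)) ⊗ₜ[R] rt.right k) =
      ∑ q ∈ (rh2 i).index,
        L (rh.left i ⊗ₜ[R] ((rh2 i).left q ⊗ₜ[R] (rh2 i).right q)) := by
    intro i
    set G : H ⊗[R] H →ₗ[R] H ⊗[R] H :=
      TensorProduct.map (LinearMap.mulLeft R (rh.left i) ∘ₗ S) LinearMap.id with hG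
    have hGapp : ∀ u v : H, G (u ⊗ₜ[R] v) = (rh.left i * S u) ⊗ₜ[R] v := by
      intro u v; rw [hG]; simp
    have h1 : ∑ k ∈ rt.index, ε (rh.right i) •
        ((rh.left i * S (rt.left k)) ⊗ₜ[R] rt.right k) =
        G (Δ (ε (rh.right i) • t)) := by
      rw [map_smul, map_smul, ← rt.eq, map_sum, Finset.smul_sum]
      exact Finset.sum_congr rfl fun k _ => by rw [hGapp]
    rw [h1, ← ht (rh.right i), ← (prodRepr rt (rh2 i)).eq, map_sum]
    simp only [prodRepr, Finset.sum_product]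
    rw [Finset.sum_comm]
    refine Finset.sum_congr rfl fun q _ => ?_
    rw [hLapp]
    refine Finset.sum_congr rfl fun k _ => ?_
    rw [hGapp, antipode_mul, ← mul_assoc]
  calc TensorProduct.map (LinearMap.mulLeft R h) LinearMap.id (LinearMap.rTensor H S (Δ t))
      = ∑ k ∈ rt.index, (h * S (rt.left k)) ⊗ₜ[R] rt.right k := by
        rw [hw, map_sum]; simp
    _ = ∑ i ∈ rh.index, ∑ k ∈ rt.index,
          ε (rh.right i) • ((rh.left i * S (rt.left k)) ⊗ₜ[R] rt.right k) := by
        rw [Finset.sum_comm]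
        refine Finset.sum_congr rfl fun k _ => ?_
        conv_lhs => rw [← sum_smul_counit rh]
        rw [Finset.sum_mul, TensorProduct.sum_tmul]
        exact Finset.sum_congr rfl fun i _ => by
          rw [smul_mul_assoc, TensorProduct.smul_tmul']
    _ = ∑ i ∈ rh.index, ∑ q ∈ (rh2 i).index,
          L (rh.left i ⊗ₜ[R] ((rh2 i).left q ⊗ₜ[R] (rh2 i).right q)) :=
        Finset.sum_congr rfl fun i _ => hsub i
    _ = ∑ i ∈ rh.index, ∑ p ∈ (rh1 i).index,
          L ((rh1 i).left p ⊗ₜ[R] ((rh1 i).right p ⊗ₜ[R] rh.right i)) :=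
        (sum_regroup L rh rh1 rh2).symm
    _ = ∑ i ∈ rh.index, ∑ k ∈ rt.index,
          ε (rh.left i) • (S (rt.left k) ⊗ₜ[R] (rt.right k * rh.right i)) := by
        refine Finset.sum_congr rfl fun i _ => ?_
        simp_rw [hLapp]
        rw [Finset.sum_comm]
        refine Finset.sum_congr rfl fun k _ => ?_
        rw [← TensorProduct.sum_tmul]
        simp_rw [← Finset.sum_mul]
        rw [HopfAlgebra.sum_mul_antipode_eq_smul (R := R) (rh1 i),
          smul_mul_assoc, one_mul, TensorProduct.smul_tmul']
    _ = ∑ k ∈ rt.index, S (rt.left k) ⊗ₜ[R] (rt.right k * h) := by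
        rw [Finset.sum_comm]
        refine Finset.sum_congr rfl fun k _ => ?_
        conv_rhs => rw [← sum_counit_smul rh]
        rw [Finset.mul_sum, TensorProduct.tmul_sum]
        exact Finset.sum_congr rfl fun i _ => by
          rw [mul_smul_comm, TensorProduct.tmul_smul]
    _ = TensorProduct.map LinearMap.id (LinearMap.mulRight R h)
          (LinearMap.rTensor H S (Δ t)) := by
        rw [hw, map_sum]; simp

lemma exists_fin_repr (z : H ⊗[R] H) :
    ∃ (n : ℕ) (x y : Fin n → H), ∑ i, x i ⊗ₜ[R] y i = z := by
  obtain ⟨s, hs⟩ := TensorProduct.exists_finset (R := R) z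
  refine ⟨s.card, fun i => ((s.equivFin.symm i : H × H)).1,
    fun i => ((s.equivFin.symm i : H × H)).2, ?_⟩
  rw [hs]
  rw [← Finset.sum_coe_sort s (fun p : H × H => p.1 ⊗ₜ[R] p.2)]
  exact Equiv.sum_comp s.equivFin.symm (fun p : s => (p : H × H).1 ⊗ₜ[R] (p : H × H).2)

lemma sep_of (w : H ⊗[R] H) (r : R) (hu : IsUnit r)
    (hmul : LinearMap.mul' R H w = algebraMap R H r)
    (hcomm : ∀ h : H, TensorProduct.map (LinearMap.mulLeft R h) LinearMap.id w =
      TensorProduct.map LinearMap.id (LinearMap.mulRight R h) w) :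
    IsSeparableExtension (algebraMap R H) := by
  obtain ⟨u, rfl⟩ := hu
  obtain ⟨n, x, y, hxy⟩ := exists_fin_repr (((u⁻¹ : Rˣ) : R) • w)
  have hsmul : ∀ h : H,
      TensorProduct.map (LinearMap.mulLeft R h) LinearMap.id (((u⁻¹ : Rˣ) : R) • w) =
      TensorProduct.map LinearMap.id (LinearMap.mulRight R h) (((u⁻¹ : Rˣ) : R) • w) := by
    intro h
    rw [map_smul, map_smul, hcomm h]
  refine ⟨n, x, y, ?_, ?_⟩
  · have h1 := congrArg (LinearMap.mul' R H) hxy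
    rw [map_sum, map_smul, hmul] at h1
    simp only [LinearMap.mul'_apply] at h1
    rw [h1, Algebra.smul_def, ← map_mul, Units.inv_mul, map_one]
  · intro M _ β hadd1 hadd2 hbal g
    set Φ : H ⊗[R] H →+ M := TensorProduct.liftAddHom
      (AddMonoidHom.mk' (fun a => AddMonoidHom.mk' (β a) (hadd2 a))
        (fun a b => AddMonoidHom.ext fun v => hadd1 a b v))
      (fun r m v => by
        simp only [AddMonoidHom.mk'_apply]
        have hm : r • m = m * algebraMap R H r := by
          rw [Algebra.smul_def, Algebra.commutes]
        have hv : r • v = algebraMap R H r * v := by rw [Algebra.smul_def]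
        rw [hm, hv, hbal]) with hΦ
    have hΦtmul : ∀ a b : H, Φ (a ⊗ₜ[R] b) = β a b := fun a b => rfl
    calc ∑ i, β (g * x i) (y i)
        = Φ (TensorProduct.map (LinearMap.mulLeft R g) LinearMap.id
            (((u⁻¹ : Rˣ) : R) • w)) := by
          rw [← hxy, map_sum, map_sum]
          exact (Finset.sum_congr rfl fun i _ => by
            rw [TensorProduct.map_tmul, LinearMap.mulLeft_apply, LinearMap.id_coe, id_eq,
              hΦtmul]).symm
      _ = Φ (TensorProduct.map LinearMap.id (LinearMap.mulRight R g)
            (((u⁻¹ : Rˣ) : R) • w)) := by rw [hsmul g]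
      _ = ∑ i, β (x i) (y i * g) := by
          rw [← hxy, map_sum, map_sum]
          exact Finset.sum_congr rfl fun i _ => by
            rw [TensorProduct.map_tmul, LinearMap.mulRight_apply, LinearMap.id_coe, id_eq,
              hΦtmul]

end SepAux

/-- A Hopf algebra `H` over a commutative ring `R` (viewed as an
extension of `R` via `algebraMap`, i.e. as the smash product `R # H` for the trivial
action) is separable over `R` if and only if there exists a left or right integral
`t ∈ H` with `ε(t)` invertible in `R`. -/
theorem hopfAlgebra_separable_iff_integral
    {R H : Type*} [CommRing R] [Ring H] [HopfAlgebra R H] :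
    IsSeparableExtension (algebraMap R H) ↔
      ∃ t : H, (IsLeftIntegral R t ∨ IsRightIntegral R t) ∧
        IsUnit (Coalgebra.counit (R := R) t) := by
  constructor
  · rintro ⟨n, x, y, hone, hβ⟩
    set β : H → H → H := fun a b => a * algebraMap R H (Coalgebra.counit (R := R) b) with hβdef
    have hadd1 : ∀ t₁ t₂ u : H, β (t₁ + t₂) u = β t₁ u + β t₂ u := fun t₁ t₂ u => by
      simp [hβdef, add_mul]
    have hadd2 : ∀ t u₁ u₂ : H, β t (u₁ + u₂) = β t u₁ + β t u₂ := fun t u₁ u₂ => by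
      simp [hβdef, mul_add]
    have hbal : ∀ (s : R) (t u : H),
        β (t * algebraMap R H s) u = β t (algebraMap R H s * u) := fun s t u => by
      simp only [hβdef, Bialgebra.counit_mul, Bialgebra.counit_algebraMap, map_mul, mul_assoc]
    set t : H := ∑ i, x i * algebraMap R H (Coalgebra.counit (R := R) (y i)) with ht
    refine ⟨t, Or.inl ?_, ?_⟩
    · intro h
      have hb := hβ H β hadd1 hadd2 hbal h
      have hL : ∑ i, β (h * x i) (y i) = h * t := by
        rw [ht, Finset.mul_sum]
        exact Finset.sum_congr rfl fun i _ => by simp only [hβdef]; rw [mul_assoc]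
      have hR : ∑ i, β (x i) (y i * h) = Coalgebra.counit (R := R) h • t := by
        rw [ht, Finset.smul_sum]
        refine Finset.sum_congr rfl fun i _ => ?_
        simp only [hβdef, Bialgebra.counit_mul, map_mul]
        rw [← mul_assoc, Algebra.smul_def, ← Algebra.commutes]
      rw [← hL, hb, hR]
    · have hε : Coalgebra.counit (R := R) t = 1 := by
        rw [ht, map_sum]
        have : ∀ i : Fin n, Coalgebra.counit (R := R)
            (x i * algebraMap R H (Coalgebra.counit (R := R) (y i))) =
            Coalgebra.counit (R := R) (x i * y i) := fun i => by
          simp [Bialgebra.counit_mul, Bialgebra.counit_algebraMap]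
        rw [Finset.sum_congr rfl fun i _ => this i, ← map_sum, hone, Bialgebra.counit_one]
      rw [hε]
      exact isUnit_one
  · rintro ⟨t, hint, hu⟩
    rcases hint with hL | hR
    · exact SepAux.sep_of (LinearMap.lTensor H (HopfAlgebra.antipode (R := R))
        (Coalgebra.comul t)) _ hu (HopfAlgebra.mul_antipode_lTensor_comul_apply t)
        (SepAux.key_left hL)
    · exact SepAux.sep_of (LinearMap.rTensor H (HopfAlgebra.antipode (R := R))
        (Coalgebra.comul t)) _ hu (HopfAlgebra.mul_antipode_rTensor_comul_apply t)
        (SepAux.key_right hR)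

end
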